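/- Let n ∈ ℕ and let ℓ₁, ℓ₂ : FreeGroup (Fin n) → ℂ be group homomorphisms to the additive group of ℂ. Then there exists a group homomorphism ρ : FreeGroup (Fin n) → SL₂(ℂ[t]), where ℂ[t] is the polynomial ring, such that for every γ ∈ FreeGroup (Fin n), the polynomial Tr(ρ(γ)) has constant coefficient 2 and coefficient of t equal to ℓ₁(γ)·ℓ₂(γ). In other words, Tr(ρₜ(γ)) = 2 + t·⟨γ,γ⟩ + o(t) where ⟨γ,γ⟩ = ℓ₁(γ)ℓ₂(γ) is a quadratic form of rank at most 2. -/

import Mathlib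

open Polynomial Matrix

noncomputable def genMat (a b : ℂ) : Matrix.SpecialLinearGroup (Fin 2) ℂ[X] :=
  ⟨!![1 + C (a*b) * X, C a; C b * X, 1], by
    rw [Matrix.det_fin_two_of, Polynomial.C_mul]; ring⟩

lemma coeff_one_mul' (p q : ℂ[X]) :
    (p*q).coeff 1 = p.coeff 0 * q.coeff 1 + p.coeff 1 * q.coeff 0 := by
  rw [Polynomial.coeff_mul, show Finset.HasAntidiagonal.antidiagonal 1 = {(0,1),(1,0)} from rfl]
  simp

def GoodMat (a b : ℂ) (M : Matrix (Fin 2) (Fin 2) ℂ[X]) : Prop :=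
  (M 0 0).coeff 0 = 1 ∧ (M 1 1).coeff 0 = 1 ∧ (M 1 0).coeff 0 = 0 ∧
  (M 0 1).coeff 0 = a ∧ (M 1 0).coeff 1 = b ∧
  (M 0 0).coeff 1 + (M 1 1).coeff 1 = a * b

lemma good_genMat (a b : ℂ) : GoodMat a b (genMat a b : Matrix (Fin 2) (Fin 2) ℂ[X]) := by
  simp [GoodMat, genMat, Polynomial.coeff_one]

lemma good_one : GoodMat 0 0 ((1 : Matrix.SpecialLinearGroup (Fin 2) ℂ[X]) : Matrix (Fin 2) (Fin 2) ℂ[X]) := by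
  simp [GoodMat, Matrix.one_apply, Polynomial.coeff_one]

lemma good_inv (a b : ℂ) : GoodMat (-a) (-b)
    (((genMat a b)⁻¹ : Matrix.SpecialLinearGroup (Fin 2) ℂ[X]) : Matrix (Fin 2) (Fin 2) ℂ[X]) := by
  rw [Matrix.SpecialLinearGroup.coe_inv, genMat]
  simp [GoodMat, Matrix.adjugate_fin_two, Polynomial.coeff_one]

lemma good_mul {a b c d : ℂ} {M N : Matrix (Fin 2) (Fin 2) ℂ[X]}
    (hM : GoodMat a b M) (hN : GoodMat c d N) : GoodMat (a + c) (b + d) (M * N) := by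
  obtain ⟨h1, h2, h3, h4, h5, h6⟩ := hM
  obtain ⟨k1, k2, k3, k4, k5, k6⟩ := hN
  have e : ∀ i j, (M * N) i j = M i 0 * N 0 j + M i 1 * N 1 j := by
    intro i j; rw [Matrix.mul_apply, Fin.sum_univ_two]
  refine ⟨?_, ?_, ?_, ?_, ?_, ?_⟩ <;>
    simp only [e, Polynomial.coeff_add, Polynomial.mul_coeff_zero, coeff_one_mul',
      h1, h2, h3, h4, h5, k1, k2, k3, k4, k5]
  · ring
  · ring
  · ring
  · ring
  · ring
  · linear_combination h6 + k6

theorem no_universal_obstruction_beyond_order_three (n : ℕ)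
    (ℓ₁ ℓ₂ : FreeGroup (Fin n) → ℂ)
    (hℓ₁ : ∀ x y : FreeGroup (Fin n), ℓ₁ (x * y) = ℓ₁ x + ℓ₁ y)
    (hℓ₂ : ∀ x y : FreeGroup (Fin n), ℓ₂ (x * y) = ℓ₂ x + ℓ₂ y) :
    ∃ ρ : FreeGroup (Fin n) →* Matrix.SpecialLinearGroup (Fin 2) (Polynomial ℂ),
      ∀ γ : FreeGroup (Fin n),
        (Matrix.trace ((ρ γ) : Matrix (Fin 2) (Fin 2) (Polynomial ℂ))).coeff 0 = 2 ∧
        (Matrix.trace ((ρ γ) : Matrix (Fin 2) (Fin 2) (Polynomial ℂ))).coeff 1 =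
          ℓ₁ γ * ℓ₂ γ := by
  have h1₁ : ℓ₁ 1 = 0 := by have := hℓ₁ 1 1; simp at this; linear_combination this
  have h1₂ : ℓ₂ 1 = 0 := by have := hℓ₂ 1 1; simp at this; linear_combination this
  have hinv₁ : ∀ x, ℓ₁ x⁻¹ = -ℓ₁ x := by
    intro x; have := hℓ₁ x x⁻¹; simp [h1₁] at this; linear_combination -this
  have hinv₂ : ∀ x, ℓ₂ x⁻¹ = -ℓ₂ x := by
    intro x; have := hℓ₂ x x⁻¹; simp [h1₂] at this; linear_combination -this
  set ρ : FreeGroup (Fin n) →* Matrix.SpecialLinearGroup (Fin 2) ℂ[X] :=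
    FreeGroup.lift (fun i => genMat (ℓ₁ (FreeGroup.of i)) (ℓ₂ (FreeGroup.of i))) with hρ
  have key : ∀ γ, GoodMat (ℓ₁ γ) (ℓ₂ γ) ((ρ γ : Matrix (Fin 2) (Fin 2) ℂ[X])) := by
    intro γ
    induction γ using FreeGroup.induction_on with
    | C1 => rw [h1₁, h1₂, _root_.map_one]; exact good_one
    | of i =>
        show GoodMat (ℓ₁ (FreeGroup.of i)) (ℓ₂ (FreeGroup.of i))
          ((ρ (FreeGroup.of i) : Matrix (Fin 2) (Fin 2) ℂ[X]))
        have : ρ (FreeGroup.of i) = genMat (ℓ₁ (FreeGroup.of i)) (ℓ₂ (FreeGroup.of i)) := by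
          rw [hρ]; exact FreeGroup.lift_apply_of
        rw [this]; exact good_genMat _ _
    | inv_of i _ =>
        show GoodMat (ℓ₁ (FreeGroup.of i)⁻¹) (ℓ₂ (FreeGroup.of i)⁻¹)
          ((ρ (FreeGroup.of i)⁻¹ : Matrix (Fin 2) (Fin 2) ℂ[X]))
        have : ρ (FreeGroup.of i)⁻¹ =
            (genMat (ℓ₁ (FreeGroup.of i)) (ℓ₂ (FreeGroup.of i)))⁻¹ := by
          rw [map_inv, hρ, FreeGroup.lift_apply_of]
        rw [this, hinv₁, hinv₂]
        exact good_inv _ _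
    | mul x y hx hy =>
        rw [hℓ₁, hℓ₂, _root_.map_mul]
        exact good_mul hx hy
  refine ⟨ρ, fun γ => ?_⟩
  obtain ⟨h1, h2, _, _, _, h6⟩ := key γ
  rw [Matrix.trace_fin_two]
  constructor
  · rw [Polynomial.coeff_add, h1, h2]; norm_num
  · rw [Polynomial.coeff_add, h6]
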